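/- If G is a dually chordal graph, then the transformed graph G' (obtained by adding a true twin for each vertex and adding edges between original vertices at distance 2, as follows: V(G') = V1 ∪ V2, two copies of V(G); v1 ∈ V1 adjacent to u2 ∈ V2 iff u ∈ N_G[v]; v2 adjacent to u2 in V2 iff 1 ≤ d_G(u,v) ≤ 2; V1 independent) is also dually chordal. -/

import Mathlib

open SimpleGraph

/-- `D` is a dominating set of `G`. -/
def IsDomSet {V : Type*} [DecidableEq V] (G : SimpleGraph V) (D : Finset V) : Prop :=
  ∀ v, v ∉ D → ∃ u ∈ D, G.Adj u v

/-- `D` is a total dominating set of `G`. -/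
def IsTotDomSet {V : Type*} [DecidableEq V] (G : SimpleGraph V) (D : Finset V) : Prop :=
  ∀ v : V, ∃ u ∈ D, G.Adj u v

/-- `u` and `v` are distinct and within distance at most 2 in `G`. -/
def WithinTwo {V : Type*} (G : SimpleGraph V) (u v : V) : Prop :=
  G.Adj u v ∨ ∃ w, G.Adj u w ∧ G.Adj w v

/-- `D` is a semitotal dominating set of `G`. -/
def IsSemiTDSet {V : Type*} [DecidableEq V] (G : SimpleGraph V) (D : Finset V) : Prop :=
  IsDomSet G D ∧ ∀ v ∈ D, ∃ u ∈ D, u ≠ v ∧ WithinTwo G u v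

/-- The domination number of `G`. -/
noncomputable def gamma {V : Type*} [Fintype V] [DecidableEq V] (G : SimpleGraph V) : ℕ :=
  sInf {n | ∃ D : Finset V, IsDomSet G D ∧ D.card = n}

/-- The total domination number of `G`. -/
noncomputable def gammaT {V : Type*} [Fintype V] [DecidableEq V] (G : SimpleGraph V) : ℕ :=
  sInf {n | ∃ D : Finset V, IsTotDomSet G D ∧ D.card = n}

/-- The semitotal domination number of `G`. -/
noncomputable def gammaT2 {V : Type*} [Fintype V] [DecidableEq V] (G : SimpleGraph V) : ℕ :=
  sInf {n | ∃ D : Finset V, IsSemiTDSet G D ∧ D.card = n}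

/-- `H` is dually chordal: there is a spanning tree `T` of `H` such that every closed
neighbourhood induces a subtree of `T`. -/
def DuallyChordal {W : Type*} (H : SimpleGraph W) : Prop :=
  ∃ T : SimpleGraph W, T ≤ H ∧ T.IsTree ∧
    ∀ z : W, (SimpleGraph.induce {v : W | v = z ∨ H.Adj z v} T).Connected

/-- The transformed graph `G'` on `V ⊕ V`. -/
def transform {V : Type*} (G : SimpleGraph V) : SimpleGraph (V ⊕ V) :=
  SimpleGraph.fromRel (fun a b =>
    match a, b with
    | Sum.inl v, Sum.inr u => u = v ∨ G.Adj v u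
    | Sum.inr v, Sum.inr u => G.Adj v u ∨ ∃ w, G.Adj v w ∧ G.Adj w u
    | _, _ => False)

namespace TransformDC

variable {V : Type*}

section TransformAdj

variable (G : SimpleGraph V)

lemma tr_adj_ll {v u : V} : ¬ (transform G).Adj (Sum.inl v) (Sum.inl u) := by
  simp [transform, fromRel_adj]

lemma tr_adj_lr {v u : V} :
    (transform G).Adj (Sum.inl v) (Sum.inr u) ↔ u = v ∨ G.Adj v u := by
  simp [transform, fromRel_adj]

lemma tr_adj_rr {v u : V} :
    (transform G).Adj (Sum.inr v) (Sum.inr u) ↔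
      v ≠ u ∧ (G.Adj v u ∨ ∃ w, G.Adj v w ∧ G.Adj w u) := by
  constructor
  · rintro ⟨hne, h | h⟩
    · exact ⟨fun e => hne (congrArg _ e), h⟩
    · refine ⟨fun e => hne (congrArg _ e), ?_⟩
      rcases h with h | ⟨w, hw1, hw2⟩
      · exact Or.inl h.symm
      · exact Or.inr ⟨w, hw2.symm, hw1.symm⟩
  · rintro ⟨hne, h⟩
    exact ⟨by simpa using hne, Or.inl h⟩

end TransformAdj

/-- The spanning tree of the transform: `T` on the `inr` copy plus pendant edges. -/
def Tr (T : SimpleGraph V) : SimpleGraph (V ⊕ V) :=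
  SimpleGraph.fromRel (fun a b =>
    match a, b with
    | Sum.inl v, Sum.inr u => u = v
    | Sum.inr v, Sum.inr u => T.Adj v u
    | _, _ => False)

variable (T : SimpleGraph V)

lemma Tr_adj_ll {v u : V} : ¬ (Tr T).Adj (Sum.inl v) (Sum.inl u) := by
  simp [Tr, fromRel_adj]

lemma Tr_adj_lr {v u : V} : (Tr T).Adj (Sum.inl v) (Sum.inr u) ↔ u = v := by
  simp [Tr, fromRel_adj]

lemma Tr_adj_rr {v u : V} : (Tr T).Adj (Sum.inr v) (Sum.inr u) ↔ T.Adj v u := by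
  constructor
  · rintro ⟨hne, h | h⟩
    · exact h
    · exact h.symm
  · intro h
    exact ⟨by simpa using h.ne, Or.inl h⟩

lemma Tr_adj_inl {v : V} {x : V ⊕ V} (h : (Tr T).Adj (Sum.inl v) x) : x = Sum.inr v := by
  cases x with
  | inl u => exact absurd h (Tr_adj_ll T)
  | inr u => rw [(Tr_adj_lr T).mp h]

/-- `Sum.inr` as a graph hom from `T` to `Tr T`. -/
def inrHom : T →g Tr T where
  toFun := Sum.inr
  map_rel' := fun h => (Tr_adj_rr T).mpr h

lemma no_inl_in_cycle {x : V ⊕ V} {c : (Tr T).Walk x x} (hc : c.IsCycle) (v : V) :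
    Sum.inl v ∉ c.support := by
  classical
  intro hmem
  have hc' := hc.rotate hmem
  set c' := c.rotate _ hmem with hc'def
  clear_value c'
  cases c' with
  | nil => exact hc'.ne_nil rfl
  | cons h q =>
    rename_i w
    obtain rfl : w = Sum.inr v := Tr_adj_inl T h
    have hmemedge : s(Sum.inl v, Sum.inr v) ∈ q.edges := by
      have : s(Sum.inl v, Sum.inr v) ∈ q.reverse.edges := by
        cases hq : q.reverse with
        | cons h' r =>
          rename_i w'
          obtain rfl : w' = Sum.inr v := Tr_adj_inl T h'
          simp
      rwa [Walk.edges_reverse, List.mem_reverse] at this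
    have htrail := hc'.isTrail
    rw [Walk.isTrail_cons] at htrail
    exact htrail.2 hmemedge

lemma lift_walk : ∀ {x y : V ⊕ V} (c : (Tr T).Walk x y)
    (_ : ∀ z ∈ c.support, ∃ u, z = Sum.inr u) (a b : V)
    (hx : x = Sum.inr a) (hy : y = Sum.inr b),
    ∃ p : T.Walk a b, p.map (inrHom T) = c.copy hx hy := by
  intro x y c
  induction c with
  | nil =>
    intro _ a b hx hy
    subst hx
    obtain rfl : a = b := Sum.inr.inj hy
    exact ⟨Walk.nil, rfl⟩
  | cons h q ih =>
    rename_i x w y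
    intro hsupp a b hx hy
    subst hx; subst hy
    obtain ⟨cw, rfl⟩ := hsupp w (by simp)
    obtain ⟨p, hp⟩ := ih (fun z hz => hsupp z (by simp [hz])) cw b rfl rfl
    refine ⟨Walk.cons ((Tr_adj_rr T).mp h) p, ?_⟩
    rw [Walk.map_cons, hp]
    rfl

lemma Tr_acyclic (hT : T.IsAcyclic) : (Tr T).IsAcyclic := by
  classical
  intro x c hc
  have hsupp : ∀ z ∈ c.support, ∃ u, z = Sum.inr u := by
    intro z hz
    cases z with
    | inl v => exact absurd hz (no_inl_in_cycle T hc v)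
    | inr u => exact ⟨u, rfl⟩
  obtain ⟨a, rfl⟩ := hsupp x c.start_mem_support
  obtain ⟨p, hp⟩ := lift_walk T c hsupp a a rfl rfl
  have hpc : p.IsCycle := by
    rw [← Walk.map_isCycle_iff_of_injective (f := inrHom T)
      (Function.injective_id.comp Sum.inr_injective), hp]
    exact hc
  exact hT p hpc

lemma Tr_connected (hne : Nonempty V) (hT : T.Connected) : (Tr T).Connected := by
  rw [connected_iff]
  refine ⟨?_, ⟨Sum.inl hne.some⟩⟩
  have hstep : ∀ x : V ⊕ V, ∃ a : V, (Tr T).Reachable x (Sum.inr a) := by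
    intro x
    cases x with
    | inl v => exact ⟨v, Adj.reachable ((Tr_adj_lr T).mpr rfl)⟩
    | inr v => exact ⟨v, Reachable.refl _⟩
  intro x y
  obtain ⟨a, ha⟩ := hstep x
  obtain ⟨b, hb⟩ := hstep y
  have : (Tr T).Reachable (Sum.inr a) (Sum.inr b) :=
    (hT.preconnected a b).map (inrHom T)
  exact (ha.trans this).trans hb.symm

lemma reach_of_induce {A : Set V} (hA : (SimpleGraph.induce A T).Connected)
    {S : Set (V ⊕ V)} (hAS : ∀ a ∈ A, Sum.inr a ∈ S)
    {u v : V} (hu : u ∈ A) (hv : v ∈ A) :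
    (SimpleGraph.induce S (Tr T)).Reachable ⟨Sum.inr u, hAS u hu⟩ ⟨Sum.inr v, hAS v hv⟩ := by
  have h := hA.preconnected ⟨u, hu⟩ ⟨v, hv⟩
  let f : (SimpleGraph.induce A T) →g (SimpleGraph.induce S (Tr T)) :=
    ⟨fun x => ⟨Sum.inr x.1, hAS x.1 x.2⟩, fun {x y} hxy => by
      simp only [comap_adj] at hxy ⊢
      exact (Tr_adj_rr T).mpr hxy⟩
  exact h.map f

end TransformDC

open TransformDC
theorem transform_duallyChordal {V : Type*} [Fintype V] [DecidableEq V]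
    (G : SimpleGraph V) (hconn : G.Connected) (hdc : DuallyChordal G) :
    DuallyChordal (transform G) := by
  classical
  obtain ⟨T, hTG, hTree, hN⟩ := hdc
  refine ⟨Tr T, ?_, ⟨Tr_connected T hconn.nonempty hTree.isConnected,
      Tr_acyclic T hTree.IsAcyclic⟩, ?_⟩
  · -- Tr T ≤ transform G
    intro a b h
    cases a with
    | inl v =>
      cases b with
      | inl u => exact absurd h (Tr_adj_ll T)
      | inr u => exact (tr_adj_lr G).mpr (Or.inl ((Tr_adj_lr T).mp h))
    | inr v =>
      cases b with
      | inl u => exact ((tr_adj_lr G).mpr (Or.inl ((Tr_adj_lr T).mp h.symm))).symm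
      | inr u =>
        have ht := (Tr_adj_rr T).mp h
        exact (tr_adj_rr G).mpr ⟨ht.ne, Or.inl (hTG ht)⟩
  · -- neighbourhood subtrees
    intro z
    cases z with
    | inl v =>
      set S : Set (V ⊕ V) := {w | w = Sum.inl v ∨ (transform G).Adj (Sum.inl v) w} with hS
      have hbase : Sum.inr v ∈ S := Or.inr ((tr_adj_lr G).mpr (Or.inl rfl))
      have hAS : ∀ a ∈ {x | x = v ∨ G.Adj v x}, Sum.inr a ∈ S := by
        rintro a (rfl | ha)
        · exact hbase
        · exact Or.inr ((tr_adj_lr G).mpr (Or.inr ha))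
      have key : ∀ x : S, (SimpleGraph.induce S (Tr T)).Reachable x ⟨Sum.inr v, hbase⟩ := by
        rintro ⟨x, hx⟩
        cases x with
        | inl u =>
          have huv : u = v := by
            rcases hx with h | h
            · exact Sum.inl.inj h
            · exact absurd h (tr_adj_ll G)
          have hadj : (SimpleGraph.induce S (Tr T)).Adj ⟨Sum.inl u, hx⟩ ⟨Sum.inr v, hbase⟩ := by
            show (Tr T).Adj (Sum.inl u) (Sum.inr v)
            exact (Tr_adj_lr T).mpr huv.symm
          exact hadj.reachable
        | inr u =>
          have hu : u ∈ {x | x = v ∨ G.Adj v x} := by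
            rcases hx with h | h
            · cases h
            · exact (tr_adj_lr G).mp h
          exact reach_of_induce T (hN v) hAS hu (Or.inl rfl)
      rw [connected_iff]
      exact ⟨fun x y => (key x).trans (key y).symm, ⟨⟨Sum.inr v, hbase⟩⟩⟩
    | inr v =>
      set S : Set (V ⊕ V) := {w | w = Sum.inr v ∨ (transform G).Adj (Sum.inr v) w} with hS
      have hbase : Sum.inr v ∈ S := Or.inl rfl
      have keyR : ∀ (u : V) (h : Sum.inr u ∈ S),
          (SimpleGraph.induce S (Tr T)).Reachable ⟨Sum.inr u, h⟩ ⟨Sum.inr v, hbase⟩ := by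
        intro u h
        rcases h with h | h
        · obtain rfl : u = v := Sum.inr.inj h
          exact Reachable.refl _
        · obtain ⟨hne, hadj | ⟨w, hvw, hwu⟩⟩ := (tr_adj_rr G).mp h
          · -- distance one
            have hAS : ∀ a ∈ {x | x = v ∨ G.Adj v x}, Sum.inr a ∈ S := by
              rintro a (rfl | ha)
              · exact Or.inl rfl
              · exact Or.inr ((tr_adj_rr G).mpr ⟨ha.ne, Or.inl ha⟩)
            exact reach_of_induce T (hN v) hAS (Or.inr hadj) (Or.inl rfl)
          · -- distance two, via w
            have hAS : ∀ a ∈ {x | x = w ∨ G.Adj w x}, Sum.inr a ∈ S := by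
              rintro a (rfl | ha)
              · exact Or.inr ((tr_adj_rr G).mpr ⟨hvw.ne, Or.inl hvw⟩)
              · by_cases hav : a = v
                · exact Or.inl (by rw [hav])
                · exact Or.inr ((tr_adj_rr G).mpr
                    ⟨fun e => hav e.symm, Or.inr ⟨w, hvw, ha⟩⟩)
            exact reach_of_induce T (hN w) hAS (Or.inr hwu) (Or.inr hvw.symm)
      have key : ∀ x : S, (SimpleGraph.induce S (Tr T)).Reachable x ⟨Sum.inr v, hbase⟩ := by
        rintro ⟨x, hx⟩
        cases x with
        | inl u =>
          have hu : v = u ∨ G.Adj u v := by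
            rcases hx with h | h
            · cases h
            · exact (tr_adj_lr G).mp h.symm
          have hmem2 : Sum.inr u ∈ S := by
            rcases hu with rfl | hadj
            · exact Or.inl rfl
            · exact Or.inr ((tr_adj_rr G).mpr ⟨hadj.ne', Or.inl hadj.symm⟩)
          have hadj : (SimpleGraph.induce S (Tr T)).Adj ⟨Sum.inl u, hx⟩ ⟨Sum.inr u, hmem2⟩ := by
            show (Tr T).Adj (Sum.inl u) (Sum.inr u)
            exact (Tr_adj_lr T).mpr rfl
          exact hadj.reachable.trans (keyR u hmem2)
        | inr u => exact keyR u hx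
      rw [connected_iff]
      exact ⟨fun x y => (key x).trans (key y).symm, ⟨⟨Sum.inr v, hbase⟩⟩⟩
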